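/- Let g : ℝⁿ → E be differentiable at x̄ with E a finite-dimensional inner product space, let K ⊆ E be a closed convex cone with g(x̄) ∈ K, let L = {d ∈ ℝⁿ : Dg(x̄)d ∈ T_K(g(x̄))} be the linearized cone and H = Dg(x̄)ᵀ[N_K(g(x̄))] the image of the normal cone under the adjoint of the derivative. Then the polar of L equals the closure of H. -/

import Mathlib

open scoped RealInnerProductSpace

/-- Polar of a set in a real inner product space. -/
def polarSet {E : Type*} [NormedAddCommGroup E] [InnerProductSpace ℝ E] (S : Set E) : Set E :=
  {z | ∀ y ∈ S, ⟪z, y⟫ ≤ 0}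

/-- Tangent cone to a convex set `K` at `y`: the closure of the cone of feasible directions. -/
def tangentConeCvx {E : Type*} [NormedAddCommGroup E] [InnerProductSpace ℝ E]
    (K : Set E) (y : E) : Set E :=
  closure {w | ∃ c : ℝ, 0 ≤ c ∧ ∃ k ∈ K, w = c • (k - y)}

section Aux

variable {F : Type*} [NormedAddCommGroup F] [InnerProductSpace ℝ F]

lemma polarSet_polarSet_eq [CompleteSpace F] (S : Set F) :
    polarSet (polarSet S) =
      (ProperCone.innerDual (ProperCone.innerDual S : Set F) : Set F) := by
  ext z
  constructor
  · intro hz w hw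
    have hmem : -w ∈ polarSet S := by
      intro y hy
      have := hw hy
      rw [innerₗ_apply_apply] at this
      rw [inner_neg_left, neg_nonpos]
      rwa [real_inner_comm]
    have := hz (-w) hmem
    rw [inner_neg_right, neg_nonpos] at this
    rw [innerₗ_apply_apply]
    rwa [real_inner_comm]
  · intro hz w hw
    have hmem : -w ∈ (ProperCone.innerDual S : Set F) := by
      intro y hy
      have := hw y hy
      rw [innerₗ_apply_apply, inner_neg_right, neg_nonneg]
      rwa [real_inner_comm] at this
    have := hz hmem
    rw [innerₗ_apply_apply, inner_neg_left, neg_nonneg] at this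
    rw [real_inner_comm] at this
    simpa using this

lemma bipolar [CompleteSpace F] (C : ConvexCone ℝ F) (hne : (C : Set F).Nonempty)
    (hcl : IsClosed (C : Set F)) : polarSet (polarSet (C : Set F)) = C := by
  have hpt : C.Pointed := by
    obtain ⟨x, hx⟩ := hne
    have ht : Filter.Tendsto (fun t : ℝ => t • x) (nhdsWithin 0 (Set.Ioi 0)) (nhds 0) := by
      have : Filter.Tendsto (fun t : ℝ => t • x) (nhds 0) (nhds ((0:ℝ) • x)) :=
        ((continuous_id.smul continuous_const : Continuous fun t : ℝ => t • x).tendsto 0)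
      rw [zero_smul] at this
      exact tendsto_nhdsWithin_of_tendsto_nhds this
    exact hcl.mem_of_tendsto ht
      (eventually_nhdsWithin_of_forall fun t (htp : (0:ℝ) < t) => C.smul_mem htp hx)
  let P : ProperCone ℝ F := ⟨C.toPointedCone hpt, hcl⟩
  have hP : (P : Set F) = C := rfl
  rw [polarSet_polarSet_eq, ← hP, ProperCone.innerDual_innerDual]

lemma polarSet_closure (S : Set F) : polarSet (closure S) = polarSet S := by
  apply Set.Subset.antisymm
  · intro z hz y hy
    exact hz y (subset_closure hy)
  · intro z hz y hy
    have hcl : IsClosed {y : F | ⟪z, y⟫ ≤ 0} :=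
      isClosed_le (continuous_const.inner continuous_id) continuous_const
    exact closure_minimal hz hcl hy

/-- The polar of any set, as a convex cone. -/
def polarCone (S : Set F) : ConvexCone ℝ F where
  carrier := polarSet S
  smul_mem' c hc z hz y hy := by
    rw [real_inner_smul_left]
    exact mul_nonpos_of_nonneg_of_nonpos hc.le (hz y hy)
  add_mem' u hu v hv y hy := by
    rw [inner_add_left]
    exact add_nonpos (hu y hy) (hv y hy)

lemma zero_mem_polarSet (S : Set F) : (0 : F) ∈ polarSet S := by
  intro y hy; simp

end Aux

section Tangent

variable {F : Type*} [NormedAddCommGroup F] [InnerProductSpace ℝ F]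

/-- The pre-tangent cone (cone of feasible directions) as a convex cone. -/
def preTangentCone (K : Set F) (hconv : Convex ℝ K) (y : F) : ConvexCone ℝ F where
  carrier := {w | ∃ c : ℝ, 0 ≤ c ∧ ∃ k ∈ K, w = c • (k - y)}
  smul_mem' c hc w hw := by
    obtain ⟨c', hc', k, hk, rfl⟩ := hw
    exact ⟨c * c', mul_nonneg hc.le hc', k, hk, smul_smul c c' _⟩
  add_mem' u hu v hv := by
    obtain ⟨c1, hc1, k1, hk1, rfl⟩ := hu
    obtain ⟨c2, hc2, k2, hk2, rfl⟩ := hv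
    rcases eq_or_lt_of_le (add_nonneg hc1 hc2) with h0 | hpos
    · have h1 : c1 = 0 := by linarith [(add_eq_zero_iff_of_nonneg hc1 hc2).1 h0.symm]
      have h2 : c2 = 0 := by linarith [(add_eq_zero_iff_of_nonneg hc1 hc2).1 h0.symm]
      exact ⟨0, le_refl 0, k1, hk1, by simp [h1, h2]⟩
    · refine ⟨c1 + c2, le_of_lt hpos, (c1 / (c1 + c2)) • k1 + (c2 / (c1 + c2)) • k2, ?_, ?_⟩
      · exact hconv hk1 hk2 (div_nonneg hc1 hpos.le) (div_nonneg hc2 hpos.le)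
          (by field_simp)
      · have hne : c1 + c2 ≠ 0 := ne_of_gt hpos
        match_scalars <;> field_simp <;> ring

end Tangent

/-- Guignard's lemma: the polar of the linearized cone
`L = {d : Dg(x̄)d ∈ T_K(g(x̄))}` equals the closure of
`H = Dg(x̄)ᵀ[N_K(g(x̄))]`. -/
theorem stmt1 {n : ℕ} {E : Type*} [NormedAddCommGroup E] [InnerProductSpace ℝ E]
    [FiniteDimensional ℝ E] (K : Set E) (hclosed : IsClosed K) (hconv : Convex ℝ K)
    (hcone : ∀ x ∈ K, ∀ c : ℝ, 0 ≤ c → c • x ∈ K)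
    (g : EuclideanSpace ℝ (Fin n) → E) (x0 : EuclideanSpace ℝ (Fin n))
    (Dg : EuclideanSpace ℝ (Fin n) →L[ℝ] E) (hg : HasFDerivAt g Dg x0)
    (hfeas : g x0 ∈ K) :
    polarSet {d | Dg d ∈ tangentConeCvx K (g x0)} =
      closure (⇑(ContinuousLinearMap.adjoint Dg) ''
        polarSet (tangentConeCvx K (g x0))) := by
  classical
  set A := ContinuousLinearMap.adjoint Dg with hA
  set T : Set E := tangentConeCvx K (g x0) with hT
  -- the tangent cone as a convex cone
  set CT : ConvexCone ℝ E := (preTangentCone K hconv (g x0)).closure with hCT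
  have hCTcoe : (CT : Set E) = T := by
    rw [hCT, ConvexCone.coe_closure]; rfl
  have hCTne : (CT : Set E).Nonempty := by
    rw [hCTcoe]
    exact ⟨0, subset_closure ⟨0, le_refl 0, g x0, hfeas, by simp⟩⟩
  have hCTcl : IsClosed (CT : Set E) := by
    rw [hCTcoe]; exact isClosed_closure
  have hTbipolar : polarSet (polarSet T) = T := by
    rw [← hCTcoe]; exact bipolar CT hCTne hCTcl
  -- the closure of the image of the polar, as a convex cone
  set CH : ConvexCone ℝ (EuclideanSpace ℝ (Fin n)) :=
    ((polarCone T).map (A : E →ₗ[ℝ] EuclideanSpace ℝ (Fin n))).closure with hCH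
  have hCHcoe : (CH : Set (EuclideanSpace ℝ (Fin n))) = closure (⇑A '' polarSet T) := by
    rw [hCH, ConvexCone.coe_closure, ConvexCone.coe_map]; rfl
  have hCHne : (CH : Set (EuclideanSpace ℝ (Fin n))).Nonempty := by
    rw [hCHcoe]
    exact ⟨0, subset_closure ⟨0, zero_mem_polarSet T, by simp⟩⟩
  have hCHcl : IsClosed (CH : Set (EuclideanSpace ℝ (Fin n))) := by
    rw [hCHcoe]; exact isClosed_closure
  -- key: the polar of the closure of the image equals the linearized cone
  have hkey : polarSet (closure (⇑A '' polarSet T)) = {d | Dg d ∈ T} := by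
    rw [polarSet_closure]
    ext d
    constructor
    · intro hd
      have : ∀ s ∈ polarSet T, ⟪Dg d, s⟫ ≤ 0 := by
        intro s hs
        have := hd (A s) ⟨s, hs, rfl⟩
        rwa [real_inner_comm, ContinuousLinearMap.adjoint_inner_left, real_inner_comm] at this
      have : Dg d ∈ polarSet (polarSet T) := this
      rwa [hTbipolar] at this
    · rintro hd _ ⟨s, hs, rfl⟩
      have hDgd : Dg d ∈ polarSet (polarSet T) := by rwa [hTbipolar]
      have := hDgd s hs
      rwa [real_inner_comm, ← ContinuousLinearMap.adjoint_inner_left, real_inner_comm] at this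
  calc polarSet {d | Dg d ∈ T}
      = polarSet (polarSet (closure (⇑A '' polarSet T))) := by rw [hkey]
    _ = closure (⇑A '' polarSet T) := by
        rw [← hCHcoe]; exact bipolar CH hCHne hCHcl
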